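/- Suppose h is supermodular, i.e., g_α is a supermodular set function for every α ∈ B. Then for every S ⊆ N the lifted supermodular inequalities are valid for H: for every (x,y,t) ∈ H, (1) sup_{α ∈ B} [ g_α(S) + Σ_{i ∈ N\S} ρ_α(i,S) x_i − Σ_{i ∈ S} ρ_α(i, N\{i})(1 − x_i) + α·y ] ≤ t, and (2) sup_{α ∈ B} [ g_α(S) + Σ_{i ∈ N\S} ρ_α(i,∅) x_i − Σ_{i ∈ S} ρ_α(i, S\{i})(1 − x_i) + α·y ] ≤ t. -/

import Mathlib

open Finset

noncomputable section

variable {ι : Type*}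

/-- Indicator vector of a subset `S ⊆ N`. -/
def indVec [DecidableEq ι] (S : Finset ι) : ι → ℝ := fun i => if i ∈ S then 1 else 0

/-- `g_α(x) = inf_{y ∈ ℝ^N} (−α·y + h(x,y))`, with values in `ℝ ∪ {±∞}`. -/
def gA [Fintype ι] (h : (ι → ℝ) → (ι → ℝ) → EReal) (α x : ι → ℝ) : EReal :=
  ⨅ y : ι → ℝ, (((-(∑ i, α i * y i) : ℝ) : EReal) + h x y)

/-- `B = {α : g_α(x) is finite for every binary x}`. -/
def BSet [Fintype ι] [DecidableEq ι] (h : (ι → ℝ) → (ι → ℝ) → EReal) : Set (ι → ℝ) :=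
  {α | ∀ S : Finset ι, gA h α (indVec S) ≠ ⊤ ∧ gA h α (indVec S) ≠ ⊥}

/-- The (real-valued) set function `g_α`, identifying subsets with indicator vectors. -/
def gR [Fintype ι] [DecidableEq ι] (h : (ι → ℝ) → (ι → ℝ) → EReal)
    (α : ι → ℝ) (S : Finset ι) : ℝ := (gA h α (indVec S)).toReal

/-- Increment function `ρ_α(i,S) = g_α(S ∪ {i}) − g_α(S)`. -/
def rho [Fintype ι] [DecidableEq ι] (h : (ι → ℝ) → (ι → ℝ) → EReal)
    (α : ι → ℝ) (i : ι) (S : Finset ι) : ℝ := gR h α (insert i S) - gR h α S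

/-- The mixed 0-1 epigraph `H = {(x,y,t) : x binary, h(x,y) ≤ t}`. -/
def HSet [Fintype ι] (h : (ι → ℝ) → (ι → ℝ) → EReal) :
    Set ((ι → ℝ) × (ι → ℝ) × ℝ) :=
  {p | (∀ i, p.1 i = 0 ∨ p.1 i = 1) ∧ h p.1 p.2.1 ≤ ((p.2.2 : ℝ) : EReal)}



section aux
variable [DecidableEq ι]

lemma lower_bd (g : Finset ι → ℝ)
    (hs : ∀ i A B, A ⊆ B → i ∉ B → g (insert i A) - g A ≤ g (insert i B) - g B)
    (L P : Finset ι) (hLP : L ⊆ P) :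
    ∀ D : Finset ι, Disjoint D P →
      g P + ∑ i ∈ D, (g (insert i L) - g L) ≤ g (P ∪ D) := by
  intro D
  induction D using Finset.induction_on with
  | empty => simp
  | @insert j D' hj ih =>
    intro hdisj
    have hjP : j ∉ P := fun hp => (Finset.disjoint_left.mp hdisj (mem_insert_self j D')) hp
    have hD'P : Disjoint D' P := Finset.disjoint_of_subset_left (subset_insert j D') hdisj
    have h1 := ih hD'P
    have hjPD : j ∉ P ∪ D' := by simp [hjP, hj]
    have h2 := hs j L (P ∪ D') (hLP.trans subset_union_left) hjPD
    rw [Finset.sum_insert hj, Finset.union_insert]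
    linarith

lemma upper_bd (g : Finset ι → ℝ)
    (hs : ∀ i A B, A ⊆ B → i ∉ B → g (insert i A) - g A ≤ g (insert i B) - g B)
    (P : Finset ι) (f : ι → Finset ι) :
    ∀ D : Finset ι, Disjoint D P → (∀ i ∈ D, (P ∪ D) \ {i} ⊆ f i ∧ i ∉ f i) →
      g (P ∪ D) ≤ g P + ∑ i ∈ D, (g (insert i (f i)) - g (f i)) := by
  intro D
  induction D using Finset.induction_on with
  | empty => simp
  | @insert j D' hj ih =>
    intro hdisj hf
    have hjP : j ∉ P := fun hp => (Finset.disjoint_left.mp hdisj (mem_insert_self j D')) hp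
    have hD'P : Disjoint D' P := Finset.disjoint_of_subset_left (subset_insert j D') hdisj
    have h1 : g (P ∪ D') ≤ g P + ∑ i ∈ D', (g (insert i (f i)) - g (f i)) := by
      refine ih hD'P (fun i hi => ⟨?_, (hf i (mem_insert_of_mem hi)).2⟩)
      refine subset_trans (Finset.sdiff_subset_sdiff ?_ subset_rfl)
        (hf i (mem_insert_of_mem hi)).1
      exact Finset.union_subset_union subset_rfl (subset_insert j D')
    have hjPD : j ∉ P ∪ D' := by simp [hjP, hj]
    have hsub : P ∪ D' ⊆ f j := by
      refine subset_trans ?_ (hf j (mem_insert_self j D')).1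
      intro a ha
      simp only [Finset.mem_sdiff, Finset.mem_singleton, Finset.union_insert]
      exact ⟨mem_insert_of_mem ha, fun h => hjPD (h ▸ ha)⟩
    have h2 := hs j (P ∪ D') (f j) hsub (hf j (mem_insert_self j D')).2
    rw [Finset.sum_insert hj, Finset.union_insert]
    linarith

lemma ineq1 [Fintype ι] (g : Finset ι → ℝ)
    (hs : ∀ i A B, A ⊆ B → i ∉ B → g (insert i A) - g A ≤ g (insert i B) - g B)
    (S T : Finset ι) :
    g S + (∑ i ∈ T \ S, (g (insert i S) - g S))
      - (∑ i ∈ S \ T, (g (insert i (univ \ {i})) - g (univ \ {i}))) ≤ g T := by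
  have h1 := lower_bd g hs S S subset_rfl (T \ S) sdiff_disjoint
  rw [Finset.union_sdiff_self_eq_union] at h1
  have h2 := upper_bd g hs T (fun i => univ \ {i}) (S \ T) sdiff_disjoint
    (fun i hi => ⟨Finset.sdiff_subset_sdiff (subset_univ _) subset_rfl, by simp⟩)
  rw [Finset.union_sdiff_self_eq_union, Finset.union_comm T S] at h2
  linarith

lemma ineq2 [Fintype ι] (g : Finset ι → ℝ)
    (hs : ∀ i A B, A ⊆ B → i ∉ B → g (insert i A) - g A ≤ g (insert i B) - g B)
    (S T : Finset ι) :
    g S + (∑ i ∈ T \ S, (g (insert i ∅) - g ∅))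
      - (∑ i ∈ S \ T, (g (insert i (S \ {i})) - g (S \ {i}))) ≤ g T := by
  have hd1 : Disjoint (T \ S) (S ∩ T) :=
    Finset.disjoint_of_subset_right Finset.inter_subset_left sdiff_disjoint
  have hd2 : Disjoint (S \ T) (S ∩ T) :=
    Finset.disjoint_of_subset_right Finset.inter_subset_right sdiff_disjoint
  have hu1 : S ∩ T ∪ T \ S = T := by ext a; simp; tauto
  have hu2 : S ∩ T ∪ S \ T = S := by ext a; simp; tauto
  have h1 := lower_bd g hs ∅ (S ∩ T) (Finset.empty_subset _) (T \ S) hd1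
  rw [hu1] at h1
  have h2 := upper_bd g hs (S ∩ T) (fun i => S \ {i}) (S \ T) hd2
    (fun i hi => ⟨by rw [hu2], by simp⟩)
  rw [hu2] at h2
  linarith

lemma sum_mul_ind [Fintype ι] (c : ι → ℝ) (T A : Finset ι) :
    ∑ i ∈ A, c i * (if i ∈ T then (1:ℝ) else 0) = ∑ i ∈ A ∩ T, c i := by
  rw [← Finset.sum_ite_mem]
  refine Finset.sum_congr rfl (fun i _ => ?_)
  by_cases hi : i ∈ T <;> simp [hi]

end aux

/-- lifted supermodular inequalities are valid.
If `h` is supermodular, then for every `S ⊆ N` and `(x,y,t) ∈ H`, the suprema over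
`α ∈ B` of the two (lifted) supermodular expressions are at most `t`. -/
theorem stmt_2 [Fintype ι] [DecidableEq ι] (h : (ι → ℝ) → (ι → ℝ) → EReal)
    (hne : ∀ x y, h x y ≠ ⊥)
    (hsup : ∀ α ∈ BSet h, ∀ (i : ι) (S T : Finset ι), S ⊆ T → i ∉ T →
      gR h α (insert i S) - gR h α S ≤ gR h α (insert i T) - gR h α T)
    (S : Finset ι) (x y : ι → ℝ) (t : ℝ) (hmem : (x, y, t) ∈ HSet h) :
    ((⨆ α ∈ BSet h,
        ((gR h α S + (∑ i ∈ Finset.univ \ S, rho h α i S * x i)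
          - (∑ i ∈ S, rho h α i (Finset.univ \ {i}) * (1 - x i))
          + ∑ i, α i * y i : ℝ) : EReal)) ≤ ((t : ℝ) : EReal))
    ∧ ((⨆ α ∈ BSet h,
        ((gR h α S + (∑ i ∈ Finset.univ \ S, rho h α i ∅ * x i)
          - (∑ i ∈ S, rho h α i (S \ {i}) * (1 - x i))
          + ∑ i, α i * y i : ℝ) : EReal)) ≤ ((t : ℝ) : EReal)) := by
  classical
  obtain ⟨hbin, hht⟩ := hmem
  set T : Finset ι := Finset.univ.filter (fun i => x i = 1) with hT
  have hmemT : ∀ i, i ∈ T ↔ x i = 1 := fun i => by simp [hT]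
  have hxT : ∀ i, x i = if i ∈ T then (1:ℝ) else 0 := by
    intro i
    by_cases hi : i ∈ T
    · simp [hi, (hmemT i).mp hi]
    · rcases hbin i with h0 | h1
      · simp only [hi, if_false]; exact h0
      · exact absurd ((hmemT i).mpr h1) hi
  have key : ∀ α ∈ BSet h, gR h α T + ∑ i, α i * y i ≤ t := by
    intro α hα
    have hx : x = indVec T := funext fun i => by rw [hxT i]; rfl
    have h1 : gA h α x ≤ ((-(∑ i, α i * y i) : ℝ) : EReal) + h x y := by
      rw [← hx] at *
      exact iInf_le _ y
    have h2 : ((-(∑ i, α i * y i) : ℝ) : EReal) + h x y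
        ≤ ((-(∑ i, α i * y i) : ℝ) : EReal) + ((t : ℝ) : EReal) :=
      add_le_add le_rfl hht
    have h3 : ((-(∑ i, α i * y i) : ℝ) : EReal) + ((t : ℝ) : EReal)
        = (((-(∑ i, α i * y i) + t : ℝ)) : EReal) := by norm_cast
    have h4 : gA h α (indVec T) ≤ (((-(∑ i, α i * y i) + t : ℝ)) : EReal) := by
      rw [← hx, ← h3]; exact h1.trans h2
    have h5 := EReal.toReal_le_toReal h4 ((hα T).2) (EReal.coe_ne_top _)
    rw [EReal.toReal_coe] at h5
    unfold gR
    linarith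
  have hs1 : ∀ c : ι → ℝ, ∑ i ∈ Finset.univ \ S, c i * x i = ∑ i ∈ T \ S, c i := by
    intro c
    have he : ∑ i ∈ Finset.univ \ S, c i * x i
        = ∑ i ∈ Finset.univ \ S, c i * (if i ∈ T then (1:ℝ) else 0) :=
      Finset.sum_congr rfl fun i _ => by rw [hxT i]
    rw [he, sum_mul_ind]
    congr 1
    ext a; simp [Finset.mem_sdiff]; tauto
  have hs2 : ∀ c : ι → ℝ, ∑ i ∈ S, c i * (1 - x i) = ∑ i ∈ S \ T, c i := by
    intro c
    have he : ∑ i ∈ S, c i * (1 - x i)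
        = ∑ i ∈ S, c i * (if i ∈ Tᶜ then (1:ℝ) else 0) :=
      Finset.sum_congr rfl fun i _ => by
        rw [hxT i]; by_cases hi : i ∈ T <;> simp [hi]
    rw [he, sum_mul_ind]
    congr 1
    ext a; simp [Finset.mem_sdiff]
  constructor
  · refine iSup₂_le fun α hα => ?_
    rw [EReal.coe_le_coe_iff]
    have hk := key α hα
    have hi := ineq1 (gR h α) (hsup α hα) S T
    rw [hs1, hs2]
    simp only [rho]
    linarith
  · refine iSup₂_le fun α hα => ?_
    rw [EReal.coe_le_coe_iff]
    have hk := key α hα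
    have hi := ineq2 (gR h α) (hsup α hα) S T
    rw [hs1, hs2]
    simp only [rho]
    linarith


end
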